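/- Let d ≥ 2 and assume that F_{GP_{d−1}} ⊆ F_{SGP_{d−1}}. Then for every p ∈ W_d and every ε > 0, the set {n ∈ ℤ : ‖p(n)‖ < ε} belongs to F_{SGP_{d−1}}. -/

import Mathlib

/-- `‖a‖`: the distance from a real number `a` to the nearest integer. -/
noncomputable def distToInt (a : ℝ) : ℝ := sInf (Set.range fun m : ℤ => |a - (m : ℝ)|)

/-- `⌈a⌉`: the least integer `m` with `|a − m| = ‖a‖`. -/
noncomputable def nint (a : ℝ) : ℤ := sInf { m : ℤ | |a - (m : ℝ)| = distToInt a }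

/-- The class `GP d` of generalized polynomials `ℤ → ℝ` of degree `≤ d`:
`GP 1` is generated by the maps `n ↦ a·n`; each `GP d` contains `GP e` for `e < d` and
the functions `n ↦ a₀ n^{p₀} ⌈f₁(n)⌉⋯⌈f_k(n)⌉` with `f_l ∈ GP (p l)` and
`p₀ + Σ p_l = d`; and each `GP d` is closed under `⌈·⌉`, scalar multiples and sums.
(No constructor produces `GP 0`, so the degrees `p l` are automatically `≥ 1`.) -/
inductive GP : ℕ → (ℤ → ℝ) → Prop where
  | base (a : ℝ) : GP 1 (fun n => a * (n : ℝ))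
  | incl {d e : ℕ} {f : ℤ → ℝ} (hf : GP e f) (hed : e < d) : GP d f
  | mono {d : ℕ} (a₀ : ℝ) (p₀ k : ℕ) (p : Fin k → ℕ) (f : Fin k → ℤ → ℝ)
      (hf : ∀ l, GP (p l) (f l)) (hsum : p₀ + ∑ l, p l = d) (hd : 1 ≤ d) :
      GP d (fun n => a₀ * (n : ℝ) ^ p₀ * ∏ l, (nint (f l n) : ℝ))
  | ceil {d : ℕ} {f : ℤ → ℝ} (hf : GP d f) : GP d (fun n => (nint (f n) : ℝ))
  | smul {d : ℕ} {f : ℤ → ℝ} (c : ℝ) (hf : GP d f) : GP d (fun n => c * f n)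
  | add {d : ℕ} {f g : ℤ → ℝ} (hf : GP d f) (hg : GP d g) : GP d (fun n => f n + g n)

/-- `L(a₁,…,a_ℓ)`: `L(a₁) = a₁` and `L(a₁,a₂,…,a_ℓ) = a₁⌈L(a₂,…,a_ℓ)⌉`. -/
noncomputable def Lfun : List ℝ → ℝ
  | [] => 0
  | [a] => a
  | a :: b :: rest => a * (nint (Lfun (b :: rest)) : ℝ)

/-- The class `SGP d` of special generalized polynomials of degree `≤ d`:
the functions `n ↦ L(n^{j₁}a₁,…,n^{j_ℓ}a_ℓ)` with `1 ≤ ℓ ≤ d`, `j_t ≥ 1`, `Σ j_t ≤ d`. -/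
def SGP (d : ℕ) (f : ℤ → ℝ) : Prop :=
  ∃ (ℓ : ℕ) (a : Fin ℓ → ℝ) (j : Fin ℓ → ℕ),
    1 ≤ ℓ ∧ ℓ ≤ d ∧ (∀ t, 1 ≤ j t) ∧ (∑ t, j t) ≤ d ∧
    f = fun n : ℤ => Lfun (List.ofFn fun t => (n : ℝ) ^ (j t) * a t)

/-- The family `F_{GP_d}` of subsets of `ℤ` containing some set
`⋂_{i=1}^k {n : ‖P_i(n)‖ < ε_i}` with `P_i ∈ GP d` and `ε_i > 0`. -/
def FGP (d : ℕ) : Set (Set ℤ) :=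
  { A | ∃ (k : ℕ) (P : Fin k → ℤ → ℝ) (ε : Fin k → ℝ),
      1 ≤ k ∧ (∀ i, GP d (P i)) ∧ (∀ i, 0 < ε i) ∧
      (⋂ i, { n : ℤ | distToInt (P i n) < ε i }) ⊆ A }

/-- The family `F_{SGP_d}`, defined like `F_{GP_d}` with `SGP d` in place of `GP d`. -/
def FSGP (d : ℕ) : Set (Set ℤ) :=
  { A | ∃ (k : ℕ) (P : Fin k → ℤ → ℝ) (ε : Fin k → ℝ),
      1 ≤ k ∧ (∀ i, SGP d (P i)) ∧ (∀ i, 0 < ε i) ∧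
      (⋂ i, { n : ℤ | distToInt (P i n) < ε i }) ⊆ A }

/-- `SW d`: the functions `n ↦ ∏_{i=1}^ℓ (w_i(n) − ⌈w_i(n)⌉)` with `ℓ ≥ 2`, `r_i ≥ 1`,
`w_i ∈ GP (r i)` and `r₁+⋯+r_ℓ ≤ d`. -/
def SW (d : ℕ) (g : ℤ → ℝ) : Prop :=
  ∃ (ℓ : ℕ) (r : Fin ℓ → ℕ) (w : Fin ℓ → ℤ → ℝ),
    2 ≤ ℓ ∧ (∀ i, 1 ≤ r i) ∧ (∀ i, GP (r i) (w i)) ∧ (∑ i, r i) ≤ d ∧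
    g = fun n : ℤ => ∏ i, (w i n - (nint (w i n) : ℝ))

/-- `W d`: finite real linear combinations of functions in `SW d`. -/
def Wset (d : ℕ) : Set (ℤ → ℝ) :=
  { p | ∃ (m : ℕ) (c : Fin m → ℝ) (g : Fin m → ℤ → ℝ),
      1 ≤ m ∧ (∀ j, SW d (g j)) ∧ p = fun n : ℤ => ∑ j, c j * g j n }


lemma bdd_distToInt (a : ℝ) : BddBelow (Set.range fun m : ℤ => |a - (m : ℝ)|) :=
  ⟨0, by rintro x ⟨m, rfl⟩; positivity⟩

lemma distToInt_le (a : ℝ) (m : ℤ) : distToInt a ≤ |a - (m : ℝ)| :=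
  csInf_le (bdd_distToInt a) ⟨m, rfl⟩

lemma distToInt_eq_round (a : ℝ) : distToInt a = |a - (round a : ℝ)| := by
  refine le_antisymm (distToInt_le a _) (le_csInf ⟨_, ⟨(0:ℤ), rfl⟩⟩ ?_)
  rintro x ⟨m, rfl⟩
  exact round_le a m

lemma abs_sub_nint (a : ℝ) : |a - (nint a : ℝ)| = distToInt a := by
  have hne : (round a) ∈ { m : ℤ | |a - (m : ℝ)| = distToInt a } :=
    (distToInt_eq_round a).symm
  have hbdd : BddBelow { m : ℤ | |a - (m : ℝ)| = distToInt a } := by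
    refine ⟨⌊a - distToInt a⌋, ?_⟩
    intro m hm
    have h1 : (m : ℝ) ≥ a - distToInt a := by
      have := abs_sub_le_iff.mp (le_of_eq hm)
      linarith [this.1]
    have : (⌊a - distToInt a⌋ : ℝ) ≤ (m : ℝ) := le_trans (Int.floor_le _) h1
    exact_mod_cast this
  exact Int.csInf_mem ⟨_, hne⟩ hbdd

lemma distToInt_nonneg (a : ℝ) : 0 ≤ distToInt a := by
  rw [distToInt_eq_round]; positivity

lemma distToInt_le_half (a : ℝ) : distToInt a ≤ 1/2 := by
  rw [distToInt_eq_round]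
  simpa [abs_sub_comm] using abs_sub_round a

lemma distToInt_le_abs (a : ℝ) : distToInt a ≤ |a| := by
  simpa using distToInt_le a 0

lemma GP_mono_le {e d : ℕ} {f : ℤ → ℝ} (hf : GP e f) (h : e ≤ d) : GP d f := by
  rcases lt_or_eq_of_le h with h | h
  · exact GP.incl hf h
  · exact h ▸ hf

theorem stmt_12 (d : ℕ) (hd : 2 ≤ d) (hind : FGP (d - 1) ⊆ FSGP (d - 1))
    (p : ℤ → ℝ) (hp : p ∈ Wset d) (ε : ℝ) (hε : 0 < ε) :
    { n : ℤ | distToInt (p n) < ε } ∈ FSGP (d - 1) := by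
  obtain ⟨m, c, g, hm, hSW, hpeq⟩ := hp
  choose ℓ r w hℓ hr hGP hsum hg using hSW
  -- total constant
  set C : ℝ := ∑ j, |c j| with hC
  have hC0 : 0 ≤ C := Finset.sum_nonneg fun j _ => abs_nonneg _
  set δ : ℝ := ε / (C + 1) with hδ
  have hδ0 : 0 < δ := div_pos hε (by linarith)
  -- index type
  let I := Σ j : Fin m, Fin (ℓ j)
  haveI : Nonempty I := ⟨⟨⟨0, hm⟩, ⟨0, by have := hℓ ⟨0, hm⟩; omega⟩⟩⟩
  let e : I ≃ Fin (Fintype.card I) := Fintype.equivFin I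
  set k := Fintype.card I with hk
  have hk1 : 1 ≤ k := Fintype.card_pos
  let Q : I → ℤ → ℝ := fun s => w s.1 s.2
  let P : Fin k → ℤ → ℝ := fun i => Q (e.symm i)
  have hQ : ∀ s : I, GP (d - 1) (Q s) := by
    rintro ⟨j, t⟩
    refine GP_mono_le (hGP j t) ?_
    -- r j t ≤ d - 1
    have h2 : 2 ≤ ℓ j := hℓ j
    have ht' : ∃ t' : Fin (ℓ j), t' ≠ t :=
      Fintype.exists_ne_of_one_lt_card (by simp; omega) t
    obtain ⟨t', ht'⟩ := ht'
    have hmem : t' ∈ Finset.univ.erase t := Finset.mem_erase.mpr ⟨ht', Finset.mem_univ _⟩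
    have h3 : r j t + r j t' ≤ ∑ u, r j u := by
      have := Finset.add_sum_erase Finset.univ (r j) (Finset.mem_univ t)
      have h4 : r j t' ≤ ∑ u ∈ Finset.univ.erase t, r j u :=
        Finset.single_le_sum (fun _ _ => Nat.zero_le _) hmem
      omega
    have := hsum j
    have := hr j t'
    omega
  have hPGP : ∀ i, GP (d - 1) (P i) := fun i => hQ (e.symm i)
  have hsub : (⋂ i, { n : ℤ | distToInt (P i n) < δ }) ⊆ { n : ℤ | distToInt (p n) < ε } := by
    intro n hn
    simp only [Set.mem_iInter, Set.mem_setOf_eq] at hn ⊢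
    have hw : ∀ (j : Fin m) (t : Fin (ℓ j)), distToInt (w j t n) < δ := by
      intro j t
      have h1 := hn (e ⟨j, t⟩)
      have h2 : P (e ⟨j, t⟩) = Q ⟨j, t⟩ := congrArg Q (e.symm_apply_apply _)
      rw [h2] at h1
      exact h1
    have hgj : ∀ j, |g j n| ≤ δ := by
      intro j
      have hgeq : g j n = ∏ t, (w j t n - (nint (w j t n) : ℝ)) := by rw [hg j]
      rw [hgeq, Finset.abs_prod]
      have habs : ∀ t : Fin (ℓ j), |w j t n - (nint (w j t n) : ℝ)| = distToInt (w j t n) :=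
        fun t => abs_sub_nint _
      have h2 : 2 ≤ ℓ j := hℓ j
      have t0 : Fin (ℓ j) := ⟨0, by omega⟩
      calc ∏ t, |w j t n - (nint (w j t n) : ℝ)|
          = |w j t0 n - (nint (w j t0 n) : ℝ)| *
            ∏ t ∈ Finset.univ.erase t0, |w j t n - (nint (w j t n) : ℝ)| :=
            (Finset.mul_prod_erase _ _ (Finset.mem_univ t0)).symm
        _ ≤ δ * 1 := by
            apply mul_le_mul
            · rw [habs t0]; exact le_of_lt (hw j t0)
            · apply Finset.prod_le_one
              · intro t _; positivity
              · intro t _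
                rw [habs t]
                linarith [distToInt_le_half (w j t n)]
            · positivity
            · exact le_of_lt hδ0
        _ = δ := mul_one δ
    have hpn : |p n| ≤ C * δ := by
      rw [hpeq]
      calc |∑ j, c j * g j n| ≤ ∑ j, |c j * g j n| := Finset.abs_sum_le_sum_abs _ _
        _ ≤ ∑ j, |c j| * δ := by
            apply Finset.sum_le_sum
            intro j _
            rw [abs_mul]
            exact mul_le_mul_of_nonneg_left (hgj j) (abs_nonneg _)
        _ = C * δ := by rw [hC, Finset.sum_mul]
    have hfin : C * δ < ε := by
      have : (C + 1) * δ = ε := by rw [hδ]; field_simp [show C + 1 ≠ 0 by linarith]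
      nlinarith
    exact lt_of_le_of_lt (le_trans (distToInt_le_abs _) hpn) hfin
  exact hind ⟨k, P, fun _ => δ, hk1, hPGP, fun _ => hδ0, hsub⟩
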